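/- Let R be a one-dimensional Noetherian local domain with fraction field K, integral closure R̄, and reduced completion. Let J be a non-zero ideal of R such that the fractional ideal R:_K J = {α ∈ K | αJ ⊆ R} is contained in R̄. Then for every ideal I of R isomorphic to J as an R-module, λ(R/I) ≥ λ(R/J); i.e., J achieves the minimal colength among all ideals isomorphic to it. -/

import Mathlib

set_option synthInstance.maxHeartbeats 1000000
set_option maxHeartbeats 1000000

open IsLocalRing

/-- The length of an `R`-module `M`, defined as the Krull dimension of its lattice of
submodules (the supremum of lengths of strict chains of submodules), valued in `ℕ∞`. -/
noncomputable def rlength (R M : Type*) [Ring R] [AddCommGroup M] [Module R M] : ℕ∞ :=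
  WithBot.unbotD 0 (Order.krullDim (Submodule R M))

open Order

open Order

lemma aux_height_le_iSup {α : Type*} [Preorder α] (a : α) :
    height a ≤ ⨆ p : LTSeries α, (p.length : ℕ∞) :=
  height_le fun p _ => le_iSup_of_le p le_rfl

lemma aux_height_add_one_le {α : Type*} [Preorder α] {a b : α} (h : a < b) :
    height a + 1 ≤ height b := by
  rw [height_eq_iSup_lt_height b]
  exact le_iSup₂_of_le a h le_rfl

lemma aux_prod_length_le {α β : Type*} [Preorder α] [Preorder β] (p : LTSeries (α × β)) :
    (p.length : ℕ∞) ≤ height p.last.1 + height p.last.2 := by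
  suffices H : ∀ (n : ℕ) (p : LTSeries (α × β)), p.length = n →
      (p.length : ℕ∞) ≤ height p.last.1 + height p.last.2 from H p.length p rfl
  intro n
  induction n with
  | zero => intro p hl; simp [hl]
  | succ n ih =>
    intro p hl
    rw [hl]
    have hlen : p.length ≠ 0 := by omega
    have ihe := ih p.eraseLast (by simp [RelSeries.eraseLast_length, hl])
    rw [RelSeries.eraseLast_length, hl] at ihe
    simp only [Nat.add_sub_cancel] at ihe
    have hlt : p.eraseLast.last < p.last := p.eraseLast_last_rel_last hlen
    have hcast : ((n + 1 : ℕ) : ℕ∞) = (n : ℕ∞) + 1 := by push_cast; ring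
    rcases Prod.lt_iff.mp hlt with ⟨h1, h2⟩ | ⟨h1, h2⟩
    · calc ((n + 1 : ℕ) : ℕ∞) = (n : ℕ∞) + 1 := hcast
        _ ≤ (height p.eraseLast.last.1 + height p.eraseLast.last.2) + 1 := by
            exact add_le_add_left ihe 1
        _ = (height p.eraseLast.last.1 + 1) + height p.eraseLast.last.2 := by ring
        _ ≤ height p.last.1 + height p.last.2 :=
            add_le_add (aux_height_add_one_le h1) (height_mono h2)
    · calc ((n + 1 : ℕ) : ℕ∞) = (n : ℕ∞) + 1 := hcast
        _ ≤ (height p.eraseLast.last.1 + height p.eraseLast.last.2) + 1 := by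
            exact add_le_add_left ihe 1
        _ = height p.eraseLast.last.1 + (height p.eraseLast.last.2 + 1) := by ring
        _ ≤ height p.last.1 + height p.last.2 :=
            add_le_add (height_mono h1) (aux_height_add_one_le h2)

section Mod

variable {R M M₂ : Type*} [Ring R] [AddCommGroup M] [Module R M]
  [AddCommGroup M₂] [Module R M₂]

lemma rlength_eq (R M : Type*) [Ring R] [AddCommGroup M] [Module R M] :
    rlength R M = ⨆ p : LTSeries (Submodule R M), (p.length : ℕ∞) := by
  rw [rlength, Order.krullDim_eq_iSup_length, WithBot.unbotD_coe]

lemma length_le_rlength (p : LTSeries (Submodule R M)) : (p.length : ℕ∞) ≤ rlength R M := by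
  rw [rlength_eq]; exact le_iSup_of_le p le_rfl

lemma rlength_eq_of_equiv (e : M ≃ₗ[R] M₂) : rlength R M = rlength R M₂ := by
  unfold rlength
  rw [Order.krullDim_eq_of_orderIso (Submodule.orderIsoMapComap e)]

lemma rlength_le_of_surjective (f : M →ₗ[R] M₂) (hf : Function.Surjective f) :
    rlength R M₂ ≤ rlength R M := by
  rw [rlength_eq, rlength_eq]
  refine iSup_le fun p => ?_
  have hsm : StrictMono (Submodule.comap f) :=
    Monotone.strictMono_of_injective (fun _ _ h => Submodule.comap_mono h)
      (Submodule.comap_injective_of_surjective hf)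
  exact le_iSup_of_le (p.map (Submodule.comap f) hsm) (by simp)

end Mod

section Mod
variable {R M : Type*} [Ring R] [AddCommGroup M] [Module R M]

lemma rlength_add (N : Submodule R M) :
    rlength R M = rlength R N + rlength R (M ⧸ N) := by
  apply le_antisymm
  · -- subadditivity
    rw [rlength_eq R M]
    refine iSup_le fun s => ?_
    set φ : Submodule R M → Submodule R N × Submodule R (M ⧸ N) :=
      fun P => (P.comap N.subtype, P.map N.mkQ) with hφ
    have hmono : Monotone φ := fun P Q h =>
      ⟨Submodule.comap_mono h, Submodule.map_mono h⟩
    have hsm : StrictMono φ := by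
      intro P Q h
      refine lt_of_le_of_ne (hmono h.le) fun heq => ?_
      have h1 : P.comap N.subtype = Q.comap N.subtype := congrArg Prod.fst heq
      have h2 : P.map N.mkQ = Q.map N.mkQ := congrArg Prod.snd heq
      have h1' : N ⊓ P = N ⊓ Q := by
        rw [← Submodule.map_comap_subtype, ← Submodule.map_comap_subtype, h1]
      have h2' : Q ≤ P ⊔ N := by
        have := Submodule.le_comap_map N.mkQ Q
        rwa [← h2, Submodule.comap_map_mkQ, sup_comm] at this
      have : Q = P := by
        have hm : P ⊔ N ⊓ Q = (P ⊔ N) ⊓ Q := (sup_inf_assoc_of_le N h.le).symm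
        calc Q = (P ⊔ N) ⊓ Q := (inf_of_le_right h2').symm
          _ = P ⊔ N ⊓ Q := by rw [← hm]
          _ = P ⊔ N ⊓ P := by rw [← h1']
          _ = P := by rw [inf_comm]; exact sup_eq_left.mpr inf_le_left
      exact (ne_of_lt h) this.symm
    have := aux_prod_length_le (s.map φ hsm)
    simp only [LTSeries.map_length] at this
    refine this.trans (add_le_add ?_ ?_)
    · exact (aux_height_le_iSup _).trans (by rw [rlength_eq])
    · exact (aux_height_le_iSup _).trans (by rw [rlength_eq])
  · -- superadditivity
    rw [rlength_eq R N, rlength_eq R (M ⧸ N)]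
    haveI : Nonempty (LTSeries (Submodule R N)) := ⟨RelSeries.singleton _ ⊥⟩
    haveI : Nonempty (LTSeries (Submodule R (M ⧸ N))) := ⟨RelSeries.singleton _ ⊥⟩
    rw [ENat.iSup_add]
    refine iSup_le fun p => ?_
    rw [ENat.add_iSup]
    refine iSup_le fun q => ?_
    have hsmP : StrictMono (Submodule.map N.subtype) :=
      Monotone.strictMono_of_injective (fun _ _ h => Submodule.map_mono h)
        (Submodule.map_injective_of_injective N.injective_subtype)
    have hsmQ : StrictMono (Submodule.comap N.mkQ) :=
      Monotone.strictMono_of_injective (fun _ _ h => Submodule.comap_mono h)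
        (Submodule.comap_injective_of_surjective N.mkQ_surjective)
    set P := p.map (Submodule.map N.subtype) hsmP with hP
    set Q := q.map (Submodule.comap N.mkQ) hsmQ with hQ
    have hle : P.last ≤ Q.head := by
      calc P.last = (p.last).map N.subtype := by simp [hP]
        _ ≤ N := Submodule.map_subtype_le N _
        _ ≤ Q.head := by
            simp only [hQ, LTSeries.head_map]
            intro x hx
            simp only [Submodule.mem_comap]
            have : N.mkQ x = 0 := by
              rw [← LinearMap.mem_ker, N.ker_mkQ]; exact hx
            rw [this]; exact q.head.zero_mem
    rcases eq_or_lt_of_le hle with heq | hlt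
    · have h2 := length_le_rlength (P.smash Q heq)
      rw [RelSeries.smash_length] at h2
      simpa only [hP, hQ, LTSeries.map_length, Nat.cast_add] using h2
    · have := length_le_rlength (P.append Q hlt)
      refine le_trans ?_ this
      simp only [RelSeries.append_length, LTSeries.map_length, hP, hQ]
      push_cast
      exact le_add_of_le_of_nonneg (by rfl) zero_le_one
end Mod

section Mod
variable {R M : Type*} [Ring R] [AddCommGroup M] [Module R M]

lemma rlength_le_one_of_simple [IsSimpleModule R M] : rlength R M ≤ 1 := by
  rw [rlength_eq]
  refine iSup_le fun p => ?_
  by_contra hc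
  push_neg at hc
  have h2 : 2 ≤ p.length := by exact_mod_cast Order.add_one_le_of_lt hc
  have h01 : p ⟨0, by omega⟩ < p ⟨1, by omega⟩ := p.strictMono (by simp [Fin.lt_def])
  have h12 : p ⟨1, by omega⟩ < p ⟨2, by omega⟩ := p.strictMono (by simp [Fin.lt_def])
  rcases eq_bot_or_eq_top (p ⟨1, by omega⟩) with h | h
  · exact absurd (h ▸ h01) (by simp)
  · exact absurd (h ▸ h12) (by simp)

lemma rlength_lt_top_of_isFiniteLength (h : IsFiniteLength R M) : rlength R M < ⊤ := by
  induction h with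
  | of_subsingleton =>
    rename_i M' _ _ _
    have : Subsingleton (Submodule R M') := by
      constructor; intro a b; ext x
      have : x = 0 := Subsingleton.elim x 0
      simp [this]
    rw [rlength_eq]
    refine lt_of_le_of_lt (iSup_le fun p => ?_) (by norm_num : (0:ℕ∞) < ⊤)
    have : p.length = 0 := by
      by_contra hne
      exact absurd (Subsingleton.elim (p ⟨0, by omega⟩) (p ⟨1, by omega⟩))
        (ne_of_lt (p.strictMono (by simp [Fin.lt_def])))
    simp [this]
  | of_simple_quotient hN ih =>
    rename_i M' _ _ N _
    rw [rlength_add N]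
    refine ENat.add_lt_top.mpr ⟨ih, lt_of_le_of_lt rlength_le_one_of_simple ?_⟩
    exact lt_top_iff_ne_top.mpr (by decide)
end Mod

lemma rlength_mul_span {R : Type*} [CommRing R] [IsDomain R] {x : R} (hx : x ≠ 0)
    (N : Ideal R) :
    rlength R (R ⧸ (Ideal.span {x} * N)) =
      rlength R (R ⧸ Ideal.span {x}) + rlength R (R ⧸ N) := by
  set xN : Ideal R := Ideal.span {x} * N with hxN
  have hle : xN ≤ Ideal.span {x} := Ideal.mul_le_left
  set W : Submodule R (R ⧸ xN) := Submodule.map xN.mkQ (Ideal.span {x}) with hW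
  -- top quotient
  have e2 : ((R ⧸ xN) ⧸ W) ≃ₗ[R] R ⧸ Ideal.span {x} :=
    Submodule.quotientQuotientEquivQuotient xN (Ideal.span {x}) hle
  -- the submodule W is isomorphic to R ⧸ N
  set f : R →ₗ[R] R ⧸ xN := xN.mkQ ∘ₗ LinearMap.mulLeft R x with hf
  have hker : LinearMap.ker f = N := by
    ext r
    simp only [hf, LinearMap.mem_ker, LinearMap.comp_apply, LinearMap.mulLeft_apply,
      Submodule.mkQ_apply, Submodule.Quotient.mk_eq_zero]
    constructor
    · intro h
      obtain ⟨z, hz, hzx⟩ := Ideal.mem_span_singleton_mul.mp h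
      have : z = r := mul_left_cancel₀ hx hzx
      rwa [this] at hz
    · intro h
      exact Ideal.mem_span_singleton_mul.mpr ⟨r, h, rfl⟩
  have hrange : LinearMap.range f = W := by
    ext y
    simp only [hf, LinearMap.mem_range, LinearMap.comp_apply, LinearMap.mulLeft_apply,
      Submodule.mkQ_apply, hW, Submodule.mem_map]
    constructor
    · rintro ⟨r, rfl⟩
      exact ⟨x * r, Ideal.mem_span_singleton'.mpr ⟨r, mul_comm r x⟩, rfl⟩
    · rintro ⟨z, hz, rfl⟩
      obtain ⟨c, hc⟩ := Ideal.mem_span_singleton'.mp hz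
      exact ⟨c, by rw [← hc, mul_comm]⟩
  have e1 : (R ⧸ N) ≃ₗ[R] W := by
    have := f.quotKerEquivRange
    rw [hker, hrange] at this
    exact this
  rw [rlength_add W, ← rlength_eq_of_equiv e1, ← rlength_eq_of_equiv e2, add_comm]

-- a f.g. module killed by the maximal ideal is Artinian
lemma art_of_max_smul_zero {R V : Type*} [CommRing R] [IsLocalRing R]
    [AddCommGroup V] [Module R V] [Module.Finite R V]
    (h : ∀ c ∈ maximalIdeal R, ∀ v : V, c • v = 0) : IsArtinian R V := by
  set m := maximalIdeal R with hm
  have htors : Module.IsTorsionBySet R V (m : Set R) := fun x a => h a.1 a.2 x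
  letI : Module (R ⧸ m) V := htors.module
  haveI : IsScalarTower R (R ⧸ m) V := htors.isScalarTower
  haveI : Module.Finite (R ⧸ m) V := Module.Finite.of_restrictScalars_finite R (R ⧸ m) V
  letI : Field (R ⧸ m) := Ideal.Quotient.field m
  haveI : IsArtinian (R ⧸ m) V := isArtinian_of_fg_of_artinian' (R := R ⧸ m)
  -- transfer along the strictly monotone map of submodule lattices
  set ψ : Submodule R V → Submodule (R ⧸ m) V := fun P =>
    { carrier := P
      add_mem' := fun ha hb => P.add_mem ha hb
      zero_mem' := P.zero_mem
      smul_mem' := by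
        rintro c x hx
        obtain ⟨r, rfl⟩ := Ideal.Quotient.mk_surjective c
        have : (Ideal.Quotient.mk m r) • x = r • x := htors.mk_smul r x
        rw [this]
        exact P.smul_mem r hx } with hψ
  have hψs : StrictMono ψ := by
    have hinj : Function.Injective ψ := by
      intro P Q h
      ext v
      constructor
      · intro hv; exact (SetLike.ext_iff.mp h v).mp hv
      · intro hv; exact (SetLike.ext_iff.mp h v).mpr hv
    have hmono : Monotone ψ := fun P Q hPQ v hv => hPQ hv
    exact hmono.strictMono_of_injective hinj
  have : WellFoundedLT (Submodule (R ⧸ m) V) := inferInstance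
  rw [isArtinian_iff]
  exact (hψs.wellFoundedLT).wf

lemma art_pow {R : Type*} [CommRing R] [IsNoetherianRing R] [IsLocalRing R] (k : ℕ) :
    IsArtinian R (R ⧸ (maximalIdeal R ^ k)) := by
  induction k with
  | zero =>
    rw [pow_zero, Ideal.one_eq_top]
    haveI : Subsingleton (R ⧸ (⊤ : Ideal R)) :=
      Submodule.Quotient.subsingleton_iff.mpr rfl
    infer_instance
  | succ k ih =>
    set m := maximalIdeal R with hm
    set W : Submodule R (R ⧸ (m ^ (k+1))) := Submodule.map (m ^ (k+1)).mkQ (m ^ k) with hW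
    refine (isArtinian_iff_submodule_quotient W).mpr ⟨?_, ?_⟩
    · -- W is f.g. and killed by m
      haveI : Module.Finite R W := by
        rw [Module.Finite.iff_fg]
        exact (IsNoetherian.noetherian (m ^ k)).map _
      apply art_of_max_smul_zero
      rintro c hc ⟨v, hv⟩
      obtain ⟨u, hu, rfl⟩ := Submodule.mem_map.mp hv
      ext
      show c • ((m ^ (k+1)).mkQ u) = 0
      rw [← map_smul, Submodule.mkQ_apply, Submodule.Quotient.mk_eq_zero]
      have : c • u = c * u := rfl
      rw [this, mul_comm, pow_succ]
      exact Ideal.mul_mem_mul hu hc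
    · -- the quotient is R ⧸ m^k
      have e : ((R ⧸ (m ^ (k+1))) ⧸ W) ≃ₗ[R] R ⧸ (m ^ k) :=
        Submodule.quotientQuotientEquivQuotient (m ^ (k+1)) (m ^ k)
          (Ideal.pow_le_pow_right (by omega))
      exact isArtinian_of_linearEquiv e.symm

section
variable {R : Type*} [CommRing R] [IsDomain R] [IsNoetherianRing R] [IsLocalRing R]

lemma prime_eq_max (hdim : ringKrullDim R = 1) {P : Ideal R} (hP : P.IsPrime) (hP0 : P ≠ ⊥) :
    P = maximalIdeal R := by
  by_contra hne
  have hPle : P ≤ maximalIdeal R := le_maximalIdeal hP.ne_top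
  have hPlt : P < maximalIdeal R := lt_of_le_of_ne hPle hne
  have hbot : (⊥ : Ideal R) < P := bot_lt_iff_ne_bot.mpr hP0
  haveI : (⊥ : Ideal R).IsPrime := Ideal.bot_prime
  let p0 : PrimeSpectrum R := ⟨⊥, inferInstance⟩
  let p1 : PrimeSpectrum R := ⟨P, hP⟩
  let p2 : PrimeSpectrum R := ⟨maximalIdeal R, (maximalIdeal.isMaximal R).isPrime⟩
  let c : LTSeries (PrimeSpectrum R) :=
    ((RelSeries.singleton _ p0 : LTSeries _).snoc p1 (by
        exact hbot)).snoc p2 (by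
        exact hPlt)
  have hc := LTSeries.length_le_krullDim c
  have hlen : c.length = 2 := rfl
  rw [hlen, ← ringKrullDim, hdim] at hc
  norm_num at hc

lemma rlength_quot_lt_top (hdim : ringKrullDim R = 1) {N : Ideal R} (hN : N ≠ ⊥) :
    rlength R (R ⧸ N) < ⊤ := by
  -- the maximal ideal is contained in the radical of N
  have hrad : maximalIdeal R ≤ N.radical := by
    rw [Ideal.radical_eq_sInf]
    refine le_sInf fun J hJ => ?_
    have hJ0 : J ≠ ⊥ := by
      rintro rfl
      exact hN (le_bot_iff.mp hJ.1)
    rw [prime_eq_max hdim hJ.2 hJ0]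
  obtain ⟨k, hk⟩ := Ideal.exists_radical_pow_le_of_fg N (IsNoetherian.noetherian _)
  have hmk : maximalIdeal R ^ k ≤ N := by
    refine le_trans ?_ hk
    exact Ideal.pow_right_mono hrad k
  -- R ⧸ N is Artinian as a quotient of R ⧸ m^k
  haveI := art_pow (R := R) k
  have hsurj : Function.Surjective
      (Submodule.mapQ (maximalIdeal R ^ k) N LinearMap.id hmk) := by
    intro y
    obtain ⟨r, rfl⟩ := Submodule.mkQ_surjective N y
    exact ⟨Submodule.Quotient.mk r, rfl⟩
  haveI : IsArtinian R (R ⧸ N) := isArtinian_of_surjective _ _ hsurj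
  haveI : IsNoetherian R (R ⧸ N) := inferInstance
  exact rlength_lt_top_of_isFiniteLength
    (isFiniteLength_iff_isNoetherian_isArtinian.mpr ⟨inferInstance, inferInstance⟩)

end

lemma rlength_quot_mono {R : Type*} [CommRing R] {N N' : Ideal R} (h : N ≤ N') :
    rlength R (R ⧸ N') ≤ rlength R (R ⧸ N) := by
  refine rlength_le_of_surjective (Submodule.mapQ N N' LinearMap.id h) fun y => ?_
  obtain ⟨r, rfl⟩ := Submodule.mkQ_surjective N' y
  exact ⟨Submodule.Quotient.mk r, rfl⟩

/-- if `R :_K J ⊆ R̄` then `J` achieves the minimal colength among all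
ideals isomorphic to it. -/
theorem stmt1 (R K : Type*) [CommRing R] [IsDomain R] [IsNoetherianRing R] [IsLocalRing R]
    (hdim : ringKrullDim R = 1)
    [Field K] [Algebra R K] [IsFractionRing R K]
    (hred : IsReduced (AdicCompletion (maximalIdeal R) R))
    (J : Ideal R) (hJ : J ≠ ⊥)
    (hcolon : ∀ α : K, (∀ j ∈ J, ∃ r : R, algebraMap R K r = α * algebraMap R K j) →
      α ∈ integralClosure R K)
    (I : Ideal R) (hiso : Nonempty (I ≃ₗ[R] J)) :
    rlength R (R ⧸ J) ≤ rlength R (R ⧸ I) := by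
  obtain ⟨e⟩ := hiso
  -- I is nonzero
  have hI : I ≠ ⊥ := by
    rintro rfl
    haveI : Subsingleton (⊥ : Ideal R) := inferInstance
    haveI : Subsingleton J := Equiv.subsingleton e.symm.toEquiv
    exact hJ (Submodule.eq_bot_of_subsingleton)
  obtain ⟨b, hbI, hb0⟩ := Submodule.exists_mem_ne_zero_of_ne_bot hI
  set xI : I := ⟨b, hbI⟩ with hxI
  set a : R := (e xI : R) with haDef
  have ha0 : a ≠ 0 := by
    intro h
    have h1 : e xI = 0 := by
      apply Subtype.ext
      rw [ZeroMemClass.coe_zero, ← haDef]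
      exact h
    have h2 : xI = 0 := by
      apply e.injective
      rw [h1, map_zero]
    exact hb0 (by simpa [hxI] using congrArg Subtype.val h2)
  -- key commutation relation
  have hab : ∀ y : I, b * ((e y : J) : R) = a * (y : R) := by
    intro y
    have h1 : e ((b : R) • y) = (b : R) • e y := map_smul e _ _
    have h2 : e (((y : R)) • xI) = ((y : R)) • e xI := map_smul e _ _
    have h3 : (b : R) • y = ((y : R)) • xI := by
      apply Subtype.ext
      simp [hxI, mul_comm]
    rw [h3, h2] at h1
    have := congrArg Subtype.val h1
    simpa [mul_comm, haDef] using this.symm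
  -- ideal equation: span{b} * J = span{a} * I
  have hIJ : Ideal.span {b} * J = Ideal.span {a} * I := by
    apply le_antisymm
    · rw [Ideal.span_singleton_mul_le_iff]
      intro z hz
      obtain ⟨y, hy⟩ := e.surjective ⟨z, hz⟩
      have : b * z = a * (y : R) := by
        have := hab y
        rwa [hy] at this
      rw [this]
      exact Ideal.mem_span_singleton_mul.mpr ⟨y, y.2, rfl⟩
    · rw [Ideal.span_singleton_mul_le_iff]
      intro z hz
      have : a * z = b * ((e ⟨z, hz⟩ : J) : R) := (hab ⟨z, hz⟩).symm
      rw [this]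
      exact Ideal.mem_span_singleton_mul.mpr ⟨_, (e ⟨z, hz⟩).2, rfl⟩
  -- pass to the fraction field
  set f := algebraMap R K with hfDef
  have hinj : Function.Injective f := IsFractionRing.injective R K
  have hfa : f a ≠ 0 := fun h => ha0 (hinj (by rw [h, map_zero]))
  set β : K := f b / f a with hβDef
  have hfb : f a * β = f b := by
    rw [hβDef]; field_simp
  -- β is in R :_K J, hence integral
  have hβint : β ∈ integralClosure R K := by
    refine hcolon β fun j hj => ?_
    obtain ⟨y, hy⟩ := e.surjective ⟨j, hj⟩
    refine ⟨(y : R), ?_⟩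
    have hbj : b * j = a * (y : R) := by
      have := hab y; rwa [hy] at this
    have : f b * f j = f a * f (y : R) := by
      rw [← map_mul, ← map_mul, hbj]
    rw [hβDef, div_mul_eq_mul_div, eq_div_iff hfa]
    linear_combination -this
  have hβI : IsIntegral R β := hβint
  -- the finitely generated module R[β] and a common denominator
  set T : Submodule R K := Subalgebra.toSubmodule (Algebra.adjoin R {β}) with hT
  have hT1 : (1 : K) ∈ T := (Algebra.adjoin R {β}).one_mem
  have hTβ : ∀ t ∈ T, β * t ∈ T := fun t ht =>
    (Algebra.adjoin R {β}).mul_mem (Algebra.self_mem_adjoin_singleton R β) ht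
  have hTfg : T.FG := hβI.fg_adjoin_singleton
  obtain ⟨s, hsT⟩ := hTfg
  obtain ⟨d, hd⟩ := IsLocalization.exist_integer_multiples_of_finset (nonZeroDivisors R) s
  have hd0 : (d : R) ≠ 0 := nonZeroDivisors.coe_ne_zero d
  have hden : ∀ t ∈ T, ∃ r : R, f r = f (d : R) * t := by
    have hsub : T ≤ Submodule.comap (LinearMap.mulLeft R (f (d : R)))
        (LinearMap.range (Algebra.linearMap R K)) := by
      rw [← hsT, Submodule.span_le]
      intro y hy
      obtain ⟨r, hr⟩ := hd y hy
      refine ⟨r, ?_⟩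
      simpa [Algebra.smul_def, hfDef] using hr
    intro t ht
    obtain ⟨r, hr⟩ := hsub ht
    exact ⟨r, hr⟩
  -- the test ideal Mi
  set Mi : Ideal R := Submodule.comap (Algebra.linearMap R K)
      (Submodule.map (LinearMap.mulLeft R (f (d : R))) T) with hMi
  have hmem : ∀ r : R, r ∈ Mi ↔ ∃ t ∈ T, f (d : R) * t = f r := by
    intro r
    simp [hMi, Submodule.mem_comap, Submodule.mem_map, hfDef]
  have hdMi : (d : R) ∈ Mi := (hmem _).mpr ⟨1, hT1, by rw [mul_one]⟩
  have hMi0 : Mi ≠ ⊥ := fun h => hd0 (by simpa [h] using hdMi)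
  -- b · Mi ⊆ a · Mi
  have hspan : Ideal.span {b} * Mi ≤ Ideal.span {a} * Mi := by
    rw [Ideal.span_singleton_mul_le_iff]
    intro r hr
    obtain ⟨t, ht, hdt⟩ := (hmem r).mp hr
    obtain ⟨w, hw⟩ := hden (β * t) (hTβ t ht)
    have hwMi : w ∈ Mi := (hmem w).mpr ⟨β * t, hTβ t ht, hw.symm⟩
    have hba : b * r = a * w := by
      apply hinj
      rw [map_mul, map_mul, ← hfb, hw]
      rw [mul_assoc, mul_comm β t, ← mul_assoc, ← hdt]
      ring
    rw [hba]
    exact Ideal.mem_span_singleton_mul.mpr ⟨w, hwMi, rfl⟩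
  -- length computations
  have hb' : Ideal.span {b} ≠ (⊥ : Ideal R) := by
    rw [Ne, Ideal.span_singleton_eq_bot]; exact hb0
  have h1 := rlength_mul_span hb0 J
  have h2 := rlength_mul_span ha0 I
  have h3 := rlength_mul_span hb0 Mi
  have h4 := rlength_mul_span ha0 Mi
  rw [hIJ] at h1
  have hEq : rlength R (R ⧸ Ideal.span {a}) + rlength R (R ⧸ I)
      = rlength R (R ⧸ Ideal.span {b}) + rlength R (R ⧸ J) := by
    rw [← h1, ← h2]
  have hMlt : rlength R (R ⧸ Mi) ≠ ⊤ := (rlength_quot_lt_top hdim hMi0).ne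
  have hable : rlength R (R ⧸ Ideal.span {a}) ≤ rlength R (R ⧸ Ideal.span {b}) := by
    have hq : rlength R (R ⧸ (Ideal.span {a} * Mi)) ≤ rlength R (R ⧸ (Ideal.span {b} * Mi)) :=
      rlength_quot_mono hspan
    rw [h3, h4] at hq
    exact (WithTop.add_le_add_iff_right hMlt).mp hq
  have hblt : rlength R (R ⧸ Ideal.span {b}) ≠ ⊤ := (rlength_quot_lt_top hdim hb').ne
  have hfinal : rlength R (R ⧸ Ideal.span {b}) + rlength R (R ⧸ J)
      ≤ rlength R (R ⧸ Ideal.span {b}) + rlength R (R ⧸ I) := by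
    rw [← hEq]
    exact add_le_add_left hable _
  exact (WithTop.add_le_add_iff_left hblt).mp hfinal
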